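/- Let p be a positive integer, ω_p ∈ ℂ a primitive p-th root of unity, α : ZMod p → ℂ, and A = Σ_{i ∈ ZMod p} α(i) J_p^i. Then for every t ∈ ℝ the matrix exponential of tA has entries (exp(tA))_{j,l} = (1/p) Φ_{l-j}(t) for all j, l ∈ ZMod p, where Φ_m(t) = Σ_{k ∈ ZMod p} ω_p^{mk} exp(t λ_k) and λ_k = Σ_{i ∈ ZMod p} α(i) ω̄_p^{ki}. -/

import Mathlib

open Matrix

noncomputable section

/-- The primary permutation (left-shift) matrix `J_p`. -/
def Jmat (p : ℕ) : Matrix (ZMod p) (ZMod p) ℂ :=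
  Matrix.of fun i j => if j = i + 1 then 1 else 0

/-- Powers of `Jmat`. -/
lemma Jmat_pow (p : ℕ) [NeZero p] (n : ℕ) (j m : ZMod p) :
    (Jmat p ^ n) j m = if m = j + (n : ZMod p) then 1 else 0 := by
  induction n generalizing j m with
  | zero => simp [Matrix.one_apply, eq_comm]
  | succ n ih =>
    rw [pow_succ, Matrix.mul_apply]
    rw [Finset.sum_eq_single (j + (n : ZMod p))]
    · rw [ih, if_pos rfl, one_mul]
      push_cast
      simp [Jmat, add_assoc]
    · intro b _ hb
      rw [ih, if_neg hb, zero_mul]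
    · simp

/-- If `x ^ p = 1`, then powers of `x` only depend on the exponent mod `p`. -/
lemma pow_eq_of_mod_eq {x : ℂ} {p : ℕ} (hx : x ^ p = 1) {m n : ℕ}
    (h : m % p = n % p) : x ^ m = x ^ n := by
  have key : ∀ m : ℕ, x ^ m = x ^ (m % p) := by
    intro m
    conv_lhs => rw [← Nat.mod_add_div m p, pow_add, pow_mul, hx, one_pow, mul_one]
  rw [key m, key n, h]

theorem stmt3 (p : ℕ) [NeZero p] (ωp : ℂ) (hωp : IsPrimitiveRoot ωp p)
    (α : ZMod p → ℂ) (A : Matrix (ZMod p) (ZMod p) ℂ)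
    (hA : A = ∑ i : ZMod p, α i • (Jmat p) ^ i.val)
    (lam : ZMod p → ℂ)
    (hlam : ∀ k, lam k = ∑ i : ZMod p, α i * (star ωp) ^ (k.val * i.val))
    (Φ : ZMod p → ℝ → ℂ)
    (hΦ : ∀ m t, Φ m t = ∑ k : ZMod p, ωp ^ (m.val * k.val) * Complex.exp (t * lam k)) :
    ∀ (t : ℝ) (j l : ZMod p),
      NormedSpace.exp ((t : ℂ) • A) j l = (1 / (p : ℂ)) * Φ (l - j) t := by
  intro t j l
  have hp0 : p ≠ 0 := NeZero.ne p
  have hpC : (p : ℂ) ≠ 0 := Nat.cast_ne_zero.2 hp0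
  set ζ := ωp with hζdef
  have hζp : ζ ^ p = 1 := hωp.pow_eq_one
  have hζ0 : ζ ≠ 0 := fun h => one_ne_zero (α := ℂ) (by rw [← hζp, h, zero_pow hp0])
  have hsζp : (star ζ) ^ p = 1 := by rw [← star_pow, hζp, star_one]
  have hnorm : ‖ζ‖ = 1 := Complex.norm_eq_one_of_pow_eq_one hζp hp0
  have hstar : star ζ = ζ⁻¹ := (Complex.inv_eq_conj hnorm).symm
  -- multiplicativity in the first `ZMod` slot of exponents
  have hmul : ∀ (x : ℂ), x ^ p = 1 → ∀ (a b k : ZMod p),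
      x ^ ((a + b).val * k.val) = x ^ (a.val * k.val) * x ^ (b.val * k.val) := by
    intro x hx a b k
    rw [← pow_add, ← add_mul]
    refine pow_eq_of_mod_eq hx ?_
    have hm : (a + b).val % p = (a.val + b.val) % p := by
      rw [ZMod.val_add]; exact Nat.mod_mod_of_dvd _ dvd_rfl
    exact Nat.ModEq.mul_right k.val hm
  -- the key exponent identity
  have hkey : ∀ (a b k : ZMod p), (star ζ) ^ (a.val * k.val) * ζ ^ (k.val * b.val)
      = ζ ^ ((b - a).val * k.val) := by
    intro a b k
    have h1 : ζ ^ (b.val * k.val) = ζ ^ ((b - a).val * k.val) * ζ ^ (a.val * k.val) := by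
      conv_lhs => rw [show b = (b - a) + a by ring]
      exact hmul ζ hζp (b - a) a k
    rw [mul_comm k.val b.val, h1, hstar, inv_pow, mul_comm ((ζ ^ (a.val * k.val))⁻¹) _,
      mul_assoc, mul_inv_cancel₀ (pow_ne_zero _ hζ0), mul_one]
  -- the DFT matrices
  set F : Matrix (ZMod p) (ZMod p) ℂ :=
    Matrix.of (fun a b : ZMod p => (star ζ) ^ (a.val * b.val)) with hF
  set G : Matrix (ZMod p) (ZMod p) ℂ :=
    Matrix.of (fun a b : ZMod p => ζ ^ (a.val * b.val)) with hG
  -- the root-of-unity sum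
  have hsum : ∀ d : ZMod p, (∑ k : ZMod p, ζ ^ (d.val * k.val))
      = if d = 0 then (p : ℂ) else 0 := by
    intro d
    have hrange : (∑ k : ZMod p, ζ ^ (d.val * k.val))
        = ∑ k ∈ Finset.range p, (ζ ^ d.val) ^ k := by
      simp_rw [pow_mul]
      refine Finset.sum_nbij' (fun a => a.val) (fun b => (b : ZMod p)) ?_ ?_ ?_ ?_ ?_
      · intro a _; exact Finset.mem_range.2 a.val_lt
      · intro b _; exact Finset.mem_univ _
      · intro a _; simp [ZMod.natCast_val, ZMod.cast_id]
      · intro b hb; exact ZMod.val_natCast_of_lt (Finset.mem_range.1 hb)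
      · intro a _; rfl
    rw [hrange]
    by_cases hd : d = 0
    · simp [hd]
    · rw [if_neg hd]
      have hne1 : ζ ^ d.val ≠ 1 := by
        intro h
        have hdvd : p ∣ d.val := hωp.dvd_of_pow_eq_one _ h
        have hpos : 0 < d.val := Nat.pos_of_ne_zero (fun h0 => hd ((ZMod.val_eq_zero d).mp h0))
        exact absurd d.val_lt (not_lt.2 (Nat.le_of_dvd hpos hdvd))
      rw [geom_sum_eq hne1, ← pow_mul, mul_comm d.val p, pow_mul, hζp, one_pow,
        sub_self, zero_div]
  -- F is invertible with inverse (1/p) • G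
  have hFG : F * ((1 / (p : ℂ)) • G) = 1 := by
    ext a b
    rw [Matrix.mul_apply, Matrix.one_apply]
    have : ∀ k : ZMod p, F a k * ((1 / (p : ℂ)) • G) k b
        = (1 / (p : ℂ)) * ζ ^ ((b - a).val * k.val) := by
      intro k
      simp only [hF, hG, Matrix.smul_apply, Matrix.of_apply, smul_eq_mul]
      rw [← hkey a b k]
      ring
    rw [Finset.sum_congr rfl (fun k _ => this k), ← Finset.mul_sum, hsum (b - a)]
    by_cases hab : a = b
    · simp [hab, one_div, inv_mul_cancel₀ hpC]
    · rw [if_neg (fun h => hab (sub_eq_zero.1 h).symm), if_neg hab, mul_zero]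
  have hGF : ((1 / (p : ℂ)) • G) * F = 1 := mul_eq_one_comm.mp hFG
  -- entries of A
  have hAent : ∀ a m : ZMod p, A a m = α (m - a) := by
    intro a m
    rw [hA]
    simp only [Matrix.sum_apply, Matrix.smul_apply, Jmat_pow, smul_eq_mul,
      ZMod.natCast_val, ZMod.cast_id]
    rw [Finset.sum_eq_single (m - a)]
    · simp
    · intro i _ hi
      rw [if_neg (fun h => hi (by rw [h]; ring)), mul_zero]
    · simp
  -- diagonalization : A * F = F * diagonal lam
  have hAF : A * F = F * Matrix.diagonal lam := by
    ext a b
    rw [Matrix.mul_apply, Matrix.mul_diagonal]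
    rw [← Equiv.sum_comp (Equiv.addLeft a) (fun m => A a m * F m b)]
    have : ∀ i : ZMod p, A a (a + i) * F (a + i) b
        = (star ζ) ^ (a.val * b.val) * (α i * (star ζ) ^ (b.val * i.val)) := by
      intro i
      rw [hAent a (a + i), add_sub_cancel_left]
      simp only [hF, Matrix.of_apply]
      rw [hmul (star ζ) hsζp a i b, mul_comm i.val b.val]
      ring
    simp only [Equiv.coe_addLeft]
    rw [Finset.sum_congr rfl (fun i _ => this i), ← Finset.mul_sum, hlam b]
    rfl
  -- express A by conjugation
  have hAeq : A = F * Matrix.diagonal lam * ((1 / (p : ℂ)) • G) := by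
    calc A = A * (F * ((1 / (p : ℂ)) • G)) := by rw [hFG, mul_one]
    _ = (A * F) * ((1 / (p : ℂ)) • G) := by rw [mul_assoc]
    _ = F * Matrix.diagonal lam * ((1 / (p : ℂ)) • G) := by rw [hAF]
  have htA : (t : ℂ) • A = F * ((t : ℂ) • Matrix.diagonal lam) * ((1 / (p : ℂ)) • G) := by
    rw [hAeq]
    simp only [mul_smul_comm, smul_mul_assoc]
    rw [smul_comm]
  -- the unit
  set U : (Matrix (ZMod p) (ZMod p) ℂ)ˣ := ⟨F, (1 / (p : ℂ)) • G, hFG, hGF⟩ with hU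
  have hexp : NormedSpace.exp ((t : ℂ) • A)
      = F * NormedSpace.exp ((t : ℂ) • Matrix.diagonal lam) * ((1 / (p : ℂ)) • G) := by
    rw [htA]
    exact Matrix.exp_units_conj U ((t : ℂ) • Matrix.diagonal lam)
  have hdiag : (t : ℂ) • Matrix.diagonal lam
      = Matrix.diagonal (fun k => (t : ℂ) * lam k) := by
    rw [← Matrix.diagonal_smul]
    rfl
  have hexpdiag : NormedSpace.exp ((t : ℂ) • Matrix.diagonal lam)
      = Matrix.diagonal (fun k => Complex.exp ((t : ℂ) * lam k)) := by
    rw [hdiag, Matrix.exp_diagonal]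
    funext k
    rw [Pi.exp_def, Complex.exp_eq_exp_ℂ]
  rw [hexp, hexpdiag, Matrix.mul_apply]
  have hterm : ∀ k : ZMod p,
      (F * Matrix.diagonal fun k => Complex.exp ((t : ℂ) * lam k)) j k
        * ((1 / (p : ℂ)) • G) k l
      = (1 / (p : ℂ)) * (ζ ^ ((l - j).val * k.val) * Complex.exp ((t : ℂ) * lam k)) := by
    intro k
    rw [Matrix.mul_diagonal]
    simp only [hF, hG, Matrix.smul_apply, Matrix.of_apply, smul_eq_mul]
    rw [← hkey j l k]
    ring
  rw [Finset.sum_congr rfl (fun k _ => hterm k), ← Finset.mul_sum, hΦ]
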